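/- In a right autonomous dagger monoidal category, the family of isomorphisms i_A : A → A** defined by i_A = (id_{A**} ⊗ η_A†) ∘ (η_{A*} ⊗ id_A) (up to unitors) is natural in A if and only if every morphism f satisfies (f*)† = (f†)*. -/

import Mathlib

open CategoryTheory MonoidalCategory

/-- A dagger monoidal structure: an involutive identity-on-objects contravariant functor
compatible with the tensor, for which the structural isomorphisms are unitary. -/
structure DaggerMonoidalStruct (C : Type*) [Category C] [MonoidalCategory C] where
  dag : ∀ {A B : C}, (A ⟶ B) → (B ⟶ A)
  dag_id : ∀ A : C, dag (𝟙 A) = 𝟙 A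
  dag_comp : ∀ {A B D : C} (f : A ⟶ B) (g : B ⟶ D), dag (f ≫ g) = dag g ≫ dag f
  dag_dag : ∀ {A B : C} (f : A ⟶ B), dag (dag f) = f
  dag_tensor : ∀ {A B A' B' : C} (f : A ⟶ A') (g : B ⟶ B'),
    dag (f ⊗ₘ g) = dag f ⊗ₘ dag g
  dag_assoc : ∀ A B D : C, dag (α_ A B D).hom = (α_ A B D).inv
  dag_leftUnitor : ∀ A : C, dag (λ_ A).hom = (λ_ A).inv
  dag_rightUnitor : ∀ A : C, dag (ρ_ A).hom = (ρ_ A).inv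

namespace DaggerMonoidalStruct

variable {C : Type*} [Category C] [MonoidalCategory C] (D : DaggerMonoidalStruct C)

lemma dag_inj {A B : C} {f g : A ⟶ B} (h : D.dag f = D.dag g) : f = g := by
  rw [← D.dag_dag f, h, D.dag_dag]

lemma dag_whiskerRight {A B : C} (f : A ⟶ B) (X : C) :
    D.dag (f ▷ X) = D.dag f ▷ X := by
  rw [← tensorHom_id, ← tensorHom_id, D.dag_tensor, D.dag_id]

lemma dag_whiskerLeft (X : C) {A B : C} (f : A ⟶ B) :
    D.dag (X ◁ f) = X ◁ D.dag f := by
  rw [← id_tensorHom, ← id_tensorHom, D.dag_tensor, D.dag_id]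

lemma dag_assoc_inv (A B E : C) : D.dag (α_ A B E).inv = (α_ A B E).hom := by
  rw [← D.dag_assoc, D.dag_dag]

lemma dag_leftUnitor_inv (A : C) : D.dag (λ_ A).inv = (λ_ A).hom := by
  rw [← D.dag_leftUnitor, D.dag_dag]

lemma dag_rightUnitor_inv (A : C) : D.dag (ρ_ A).inv = (ρ_ A).hom := by
  rw [← D.dag_rightUnitor, D.dag_dag]

variable [RightRigidCategory C]

/-- The dagger pairing: `A` is a right dual of `Aᘁ`. -/
@[reducible] noncomputable def dagPairing (A : C) : ExactPairing (Aᘁ : C) A where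
  coevaluation' := D.dag (ε_ A (Aᘁ))
  evaluation' := D.dag (η_ A (Aᘁ))
  coevaluation_evaluation' := by
    apply D.dag_inj
    simp only [D.dag_comp, dag_whiskerLeft, dag_whiskerRight, D.dag_dag, D.dag_assoc,
      dag_assoc_inv, dag_leftUnitor_inv, D.dag_rightUnitor, D.dag_leftUnitor,
      dag_rightUnitor_inv]
    rw [Category.assoc, ExactPairing.evaluation_coevaluation]
  evaluation_coevaluation' := by
    apply D.dag_inj
    simp only [D.dag_comp, dag_whiskerLeft, dag_whiskerRight, D.dag_dag, D.dag_assoc,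
      dag_assoc_inv, dag_leftUnitor_inv, D.dag_rightUnitor, D.dag_leftUnitor,
      dag_rightUnitor_inv]
    rw [Category.assoc, ExactPairing.coevaluation_evaluation]

/-- `A` as a right dual of `Aᘁ` via the dagger pairing. -/
@[reducible] noncomputable def dagDual (A : C) : HasRightDual (Aᘁ : C) :=
  letI := D.dagPairing A
  ⟨A⟩

end DaggerMonoidalStruct

variable {C : Type*} [Category C] [MonoidalCategory C] [RightRigidCategory C]

/-- The canonical map `i_A : A ⟶ Aᘁᘁ` of a right autonomous dagger monoidal category,
defined (up to unitors) from the coevaluation of `Aᘁ` and the dagger of the coevaluation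
of `A`. -/
noncomputable def daggerPivMap (D : DaggerMonoidalStruct C) (A : C) : A ⟶ ((Aᘁ)ᘁ : C) :=
  (ρ_ A).inv ≫ (A ◁ η_ (Aᘁ : C) ((Aᘁ)ᘁ)) ≫ (α_ A (Aᘁ : C) (((Aᘁ)ᘁ : C))).inv ≫
    ((D.dag (η_ A (Aᘁ))) ▷ (((Aᘁ)ᘁ : C))) ≫ (λ_ (((Aᘁ)ᘁ : C))).hom

/-- `daggerPivMap` as a mixed-instance adjoint mate of the identity. -/
lemma daggerPivMap_eq (D : DaggerMonoidalStruct C) (A : C) :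
    daggerPivMap D A =
      @rightAdjointMate C _ _ (Aᘁ : C) (Aᘁ : C) inferInstance (D.dagDual A) (𝟙 (Aᘁ : C)) := by
  dsimp [daggerPivMap, rightAdjointMate, DaggerMonoidalStruct.dagDual,
    DaggerMonoidalStruct.dagPairing, ExactPairing.evaluation, ExactPairing.coevaluation]
  simp
  rfl

/-- The inverse comparison map. -/
noncomputable def daggerPivInv (D : DaggerMonoidalStruct C) (A : C) : ((Aᘁ)ᘁ : C) ⟶ A :=
  @rightAdjointMate C _ _ (Aᘁ : C) (Aᘁ : C) (D.dagDual A) inferInstance (𝟙 (Aᘁ : C))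

lemma daggerPivMap_inv (D : DaggerMonoidalStruct C) (A : C) :
    daggerPivMap D A ≫ daggerPivInv D A = 𝟙 A := by
  rw [daggerPivMap_eq, daggerPivInv,
    ← @comp_rightAdjointMate C _ _ (Aᘁ : C) (Aᘁ : C) (Aᘁ : C)
      (D.dagDual A) inferInstance (D.dagDual A) (𝟙 _) (𝟙 _),
    Category.comp_id, @rightAdjointMate_id C _ _ (Aᘁ : C) (D.dagDual A)]
  rfl

/-- The dagger mate of a morphism `Bᘁ ⟶ Aᘁ`. -/
noncomputable def dmate (D : DaggerMonoidalStruct C) {A B : C} (h : (Bᘁ : C) ⟶ (Aᘁ : C)) :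
    A ⟶ B :=
  @rightAdjointMate C _ _ (Bᘁ : C) (Aᘁ : C) (D.dagDual B) (D.dagDual A) h

/-- The key compatibility: the dagger mate of `fᘁ` intertwines the comparison maps with
the double mate `fᘁᘁ`. -/
lemma dmate_star (D : DaggerMonoidalStruct C) {A B : C} (f : A ⟶ B) :
    dmate D (fᘁ) ≫ daggerPivMap D B = daggerPivMap D A ≫ ((fᘁ)ᘁ) := by
  have h1 := @comp_rightAdjointMate C _ _ (Bᘁ : C) (Bᘁ : C) (Aᘁ : C)
    inferInstance (D.dagDual B) (D.dagDual A) (𝟙 _) (fᘁ)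
  have h2 := @comp_rightAdjointMate C _ _ (Bᘁ : C) (Aᘁ : C) (Aᘁ : C)
    inferInstance inferInstance (D.dagDual A) (fᘁ) (𝟙 _)
  rw [Category.id_comp] at h1
  rw [Category.comp_id] at h2
  unfold dmate
  rw [daggerPivMap_eq, daggerPivMap_eq]
  exact h1.symm.trans h2

/-- Left dual structure on `Aᘁ` coming from the standard pairing. -/
@[reducible] noncomputable def leftDualOfRight (A : C) : HasLeftDual (Aᘁ : C) := ⟨A⟩

/-- The left mate of a morphism `Bᘁ ⟶ Aᘁ` with respect to the standard pairings. -/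
noncomputable def lmate {A B : C} (h : (Bᘁ : C) ⟶ (Aᘁ : C)) : A ⟶ B :=
  @leftAdjointMate C _ _ (Bᘁ : C) (Aᘁ : C) (leftDualOfRight B) (leftDualOfRight A) h

lemma lmate_mate {A B : C} (g : A ⟶ B) : lmate (gᘁ) = g := by
  dsimp only [lmate, leftAdjointMate, leftDualOfRight]
  change (λ_ A).inv ≫ η_ B (Bᘁ) ▷ A ≫ (B ◁ gᘁ) ▷ A ≫ (α_ B (Aᘁ) A).hom ≫
    B ◁ ε_ A (Aᘁ) ≫ (ρ_ B).hom = g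
  rw [← comp_whiskerRight_assoc, coevaluation_comp_rightAdjointMate,
    comp_whiskerRight_assoc, associator_naturality_left_assoc,
    ← whisker_exchange_assoc, ExactPairing.evaluation_coevaluation_assoc]
  simp

lemma mate_lmate {A B : C} (h : (Bᘁ : C) ⟶ (Aᘁ : C)) : (lmate h : A ⟶ B)ᘁ = h := by
  have key : (Bᘁ : C) ◁ (lmate h : A ⟶ B) ≫ ε_ B (Bᘁ) = h ▷ A ≫ ε_ A (Aᘁ) :=
    @leftAdjointMate_comp_evaluation C _ _ (Bᘁ : C) (Aᘁ : C)
      (leftDualOfRight B) (leftDualOfRight A) h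
  dsimp only [rightAdjointMate]
  calc
    _ = 𝟙 _ ⊗≫ (Bᘁ : C) ◁ η_ A (Aᘁ) ⊗≫
        ((Bᘁ : C) ◁ (lmate h : A ⟶ B) ≫ ε_ B (Bᘁ)) ▷ (Aᘁ : C) ⊗≫ 𝟙 _ := by
      monoidal
    _ = 𝟙 _ ⊗≫ ((Bᘁ : C) ◁ η_ A (Aᘁ) ≫ h ▷ (A ⊗ (Aᘁ : C))) ⊗≫
        ε_ A (Aᘁ) ▷ (Aᘁ : C) ⊗≫ 𝟙 _ := by
      rw [key]; monoidal
    _ = h ⊗≫ ((Aᘁ : C) ◁ η_ A (Aᘁ) ⊗≫ ε_ A (Aᘁ) ▷ (Aᘁ : C)) ⊗≫ 𝟙 _ := by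
      rw [whisker_exchange]; monoidal
    _ = h := by
      rw [ExactPairing.coevaluation_evaluation'']; monoidal

lemma dmate_eq_dag_lmate (D : DaggerMonoidalStruct C) {A B : C} (h : (Bᘁ : C) ⟶ (Aᘁ : C)) :
    dmate D h = D.dag (lmate (D.dag h)) := by
  apply D.dag_inj
  conv_rhs => rw [D.dag_dag]
  dsimp only [dmate, rightAdjointMate, DaggerMonoidalStruct.dagDual,
    DaggerMonoidalStruct.dagPairing, lmate, leftAdjointMate, leftDualOfRight,
    ExactPairing.evaluation, ExactPairing.coevaluation]
  change D.dag ((ρ_ A).inv ≫ A ◁ D.dag (ε_ B (Bᘁ)) ≫ A ◁ h ▷ B ≫ (α_ A (Aᘁ) B).inv ≫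
      D.dag (η_ A (Aᘁ)) ▷ B ≫ (λ_ B).hom) =
    (λ_ B).inv ≫ η_ A (Aᘁ) ▷ B ≫ (A ◁ D.dag h) ▷ B ≫ (α_ A (Bᘁ) B).hom ≫
      A ◁ ε_ B (Bᘁ) ≫ (ρ_ A).hom
  simp only [D.dag_comp, D.dag_whiskerLeft, D.dag_whiskerRight, D.dag_dag, D.dag_assoc,
    D.dag_assoc_inv, D.dag_leftUnitor, D.dag_leftUnitor_inv, D.dag_rightUnitor,
    D.dag_rightUnitor_inv, Category.assoc]
  monoidal

/-- In a right autonomous dagger monoidal category, the family `i_A : A ⟶ Aᘁᘁ` is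
natural in `A` if and only if every morphism `f` satisfies `(f*)† = (f†)*`. -/
theorem daggerPivMap_natural_iff_mate_dagger (D : DaggerMonoidalStruct C) :
    (∀ {A B : C} (f : A ⟶ B), f ≫ daggerPivMap D B = daggerPivMap D A ≫ ((fᘁ)ᘁ)) ↔
    (∀ {A B : C} (f : A ⟶ B), D.dag (fᘁ) = ((D.dag f)ᘁ)) := by
  constructor
  · intro hnat A B f
    have h1 : f ≫ daggerPivMap D B = dmate D (fᘁ) ≫ daggerPivMap D B := by
      rw [hnat f, dmate_star]
    have h2 : f = dmate D (fᘁ) := by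
      have h := congrArg (· ≫ daggerPivInv D B) h1
      simpa only [Category.assoc, daggerPivMap_inv, Category.comp_id] using h
    rw [dmate_eq_dag_lmate] at h2
    have h3 : D.dag f = lmate (D.dag (rightAdjointMate f)) := by
      conv_lhs => rw [h2, D.dag_dag]
    rw [h3]
    exact (mate_lmate _).symm
  · intro hdag A B f
    have h4 : rightAdjointMate f = D.dag (rightAdjointMate (D.dag f)) := by
      rw [hdag (D.dag f), D.dag_dag]
    have h5 : dmate D (rightAdjointMate f) = f := by
      rw [h4, dmate_eq_dag_lmate, D.dag_dag, lmate_mate (D.dag f), D.dag_dag]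
    rw [← dmate_star, h5]
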